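/- Let R > 0, 0 < p ≤ q, and let f, g be nonnegative functions in L^q([0,R]) whose decreasing rearrangements f*, g* satisfy ∫₀ˢ (f*)^p dt ≤ ∫₀ˢ (g*)^p dt for all s ∈ [0,R]. Then ∫₀ᴿ f^q dt ≤ ∫₀ᴿ g^q dt. -/

import Mathlib

open MeasureTheory Set
open scoped ENNReal

/-- Distribution function of `f` on `[0,R]`. -/
noncomputable def distribFun (R : ℝ) (f : ℝ → ℝ) (t : ℝ) : ℝ :=
  (volume {x ∈ Icc (0:ℝ) R | t < f x}).toReal

/-- Decreasing rearrangement of `f` on `[0,R]`: the generalized inverse of the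
distribution function of `|f|` (for nonnegative `f`, of `f`). -/
noncomputable def decRearr (R : ℝ) (f : ℝ → ℝ) (s : ℝ) : ℝ :=
  sInf {t : ℝ | 0 ≤ t ∧ distribFun R f t ≤ s}



/-- Downward-closed subsets of `Ioi 0` are measurable. -/
lemma hlp_meas_dc {S : Set ℝ} (hS : S ⊆ Ioi 0)
    (hdc : ∀ x ∈ S, ∀ y, 0 < y → y ≤ x → y ∈ S) : MeasurableSet S := by
  rcases S.eq_empty_or_nonempty with h | hne
  · simp [h]
  by_cases hbd : BddAbove S
  · set b := sSup S with hb
    have hsub : S ⊆ Ioc 0 b := fun x hx => ⟨hS hx, le_csSup hbd hx⟩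
    have hsup : Ioo 0 b ⊆ S := by
      intro x hx
      obtain ⟨y, hy, hxy⟩ := exists_lt_of_lt_csSup hne hx.2
      exact hdc y hy x hx.1 hxy.le
    have hSeq : S = Ioo 0 b ∪ (S ∩ {b}) := by
      ext x
      constructor
      · intro hx
        rcases lt_or_eq_of_le (hsub hx).2 with h | h
        · exact Or.inl ⟨(hsub hx).1, h⟩
        · exact Or.inr ⟨hx, h⟩
      · rintro (hx | hx)
        · exact hsup hx
        · exact hx.1
    rw [hSeq]
    exact measurableSet_Ioo.union
      (((countable_singleton b).mono inter_subset_right).measurableSet)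
  · have hSeq : S = Ioi 0 := by
      apply Subset.antisymm hS
      intro x hx
      obtain ⟨y, hy, hxy⟩ := not_bddAbove_iff.1 hbd x
      exact hdc y hy x hx hxy.le
    rw [hSeq]; exact measurableSet_Ioi

/-- The indicator on `Ioi 0` of a function antitone on `Ioi 0` is measurable. -/
lemma hlp_meas_indicator {u : ℝ → ℝ} (hu : AntitoneOn u (Ioi 0)) :
    Measurable ((Ioi 0).indicator u) := by
  apply measurable_of_Ioi
  intro a
  have hset : (Ioi 0).indicator u ⁻¹' Ioi a =
      (if a < 0 then Iic 0 else (∅ : Set ℝ)) ∪ {s | 0 < s ∧ a < u s} := by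
    ext s
    by_cases hs : 0 < s
    · simp only [mem_preimage, Set.indicator_of_mem (mem_Ioi.2 hs), mem_Ioi, mem_union,
        mem_setOf_eq]
      constructor
      · intro h; exact Or.inr ⟨hs, h⟩
      · rintro (h | h)
        · split_ifs at h with ha
          · exact absurd (mem_Iic.1 h) (not_le.2 hs)
          · exact absurd h (notMem_empty s)
        · exact h.2
    · simp only [mem_preimage, Set.indicator_of_notMem (fun h => hs (mem_Ioi.1 h)), mem_Ioi,
        mem_union, mem_setOf_eq]
      constructor
      · intro h
        left
        rw [if_pos h]
        exact mem_Iic.2 (not_lt.1 hs)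
      · rintro (h | h)
        · split_ifs at h with ha
          · exact ha
          · exact absurd h (notMem_empty s)
        · exact absurd h.1 hs
  rw [hset]
  refine MeasurableSet.union ?_ ?_
  · split_ifs <;> simp
  · exact hlp_meas_dc (fun x hx => hx.1)
      (fun x hx y hy hyx => ⟨hy, lt_of_lt_of_le hx.2 (hu hy (hx.1) hyx)⟩)

/-- Tangent-line inequality for `x ↦ x ^ r`, `r ≥ 1`, on nonnegative reals. -/
lemma hlp_rpow_tangent {x y r : ℝ} (hx : 0 ≤ x) (hy : 0 ≤ y) (hr : 1 ≤ r) :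
    x ^ r - y ^ r ≤ r * x ^ (r - 1) * (x - y) := by
  rcases eq_or_lt_of_le hx with hx0 | hx0
  · rcases eq_or_lt_of_le hr with hr1 | hr1
    · rw [← hx0, ← hr1]
      simp [Real.rpow_one]
    · rw [← hx0, Real.zero_rpow (by linarith : r ≠ 0),
        Real.zero_rpow (by intro h; rw [sub_eq_zero] at h; exact hr1.ne h.symm)]
      have : 0 ≤ y ^ r := Real.rpow_nonneg hy r
      nlinarith
  · have hyx : -1 ≤ y / x - 1 := by
      have : 0 ≤ y / x := div_nonneg hy hx0.le
      linarith
    have hb := one_add_mul_self_le_rpow_one_add hyx hr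
    have h1s : 1 + (y / x - 1) = y / x := by ring
    rw [h1s] at hb
    have hxr : 0 < x ^ r := Real.rpow_pos_of_pos hx0 r
    have h2 : x ^ r * (1 + r * (y / x - 1)) ≤ x ^ r * (y / x) ^ r :=
      mul_le_mul_of_nonneg_left hb hxr.le
    have h3 : x ^ r * (y / x) ^ r = y ^ r := by
      rw [← Real.mul_rpow hx0.le (div_nonneg hy hx0.le), mul_div_cancel₀ y hx0.ne']
    rw [h3] at h2
    have e1 : x ^ (r - 1) * x = x ^ r := by
      rw [← Real.rpow_add_one hx0.ne' (r - 1)]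
      ring_nf
    have ey : x ^ r * (y / x) = x ^ (r - 1) * y := by
      rw [← e1]; field_simp
    nlinarith [h2, ey, e1]

section basic
variable {R : ℝ} {w : ℝ → ℝ}

lemma hlp_vol_ne_top (R : ℝ) (w : ℝ → ℝ) (t : ℝ) :
    volume {x ∈ Icc (0:ℝ) R | t < w x} ≠ ∞ :=
  ne_of_lt (lt_of_le_of_lt (measure_mono (sep_subset _ _)) measure_Icc_lt_top)

lemma hlp_d_nonneg (R : ℝ) (w : ℝ → ℝ) (t : ℝ) : 0 ≤ distribFun R w t :=
  ENNReal.toReal_nonneg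

lemma hlp_d_anti (R : ℝ) (w : ℝ → ℝ) : Antitone (distribFun R w) := by
  intro t t' htt'
  apply ENNReal.toReal_mono (hlp_vol_ne_top R w t)
  exact measure_mono (fun x hx => ⟨hx.1, lt_of_le_of_lt htt' hx.2⟩)

lemma hlp_d_le_R (hR : 0 < R) (t : ℝ) : distribFun R w t ≤ R := by
  have h : volume {x ∈ Icc (0:ℝ) R | t < w x} ≤ volume (Icc (0:ℝ) R) :=
    measure_mono (sep_subset _ _)
  have := ENNReal.toReal_mono (by simp) h
  rwa [Real.volume_Icc, ENNReal.toReal_ofReal (by linarith), sub_zero] at this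

lemma hlp_d_spectrum (hw : Measurable w) {s : ℝ} (hs : 0 < s) :
    ∃ t, 0 ≤ t ∧ distribFun R w t ≤ s := by
  set A : ℕ → Set ℝ := fun n => {x ∈ Icc (0:ℝ) R | (n : ℝ) < w x} with hA
  have hmeas : ∀ n, NullMeasurableSet (A n) volume := fun n =>
    ((measurableSet_Icc.inter (hw measurableSet_Ioi))).nullMeasurableSet
  have hanti : Antitone A := fun n m hnm x hx =>
    ⟨hx.1, lt_of_le_of_lt (by exact_mod_cast Nat.cast_le.2 hnm) hx.2⟩
  have hfin : ∃ n, volume (A n) ≠ ∞ :=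
    ⟨0, ne_of_lt (lt_of_le_of_lt (measure_mono (sep_subset _ _)) measure_Icc_lt_top)⟩
  have hempty : ⋂ n, A n = ∅ := by
    ext x
    simp only [mem_iInter, mem_empty_iff_false, iff_false]
    intro h
    obtain ⟨n, hn⟩ := exists_nat_gt (w x)
    exact absurd (h n).2 (not_lt.2 hn.le)
  have htend := tendsto_measure_iInter_atTop hmeas hanti hfin
  rw [hempty, measure_empty] at htend
  have : ∀ᶠ n in Filter.atTop, volume (A n) < ENNReal.ofReal s := by
    apply htend.eventually_lt_const
    simpa using hs
  obtain ⟨n, hn⟩ := this.exists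
  refine ⟨n, Nat.cast_nonneg n, ?_⟩
  have := ENNReal.toReal_mono ENNReal.ofReal_ne_top hn.le
  rwa [ENNReal.toReal_ofReal hs.le] at this

lemma hlp_F_nonneg (R : ℝ) (w : ℝ → ℝ) (s : ℝ) : 0 ≤ decRearr R w s :=
  Real.sInf_nonneg (fun x hx => hx.1)

lemma hlp_F_anti (hw : Measurable w) : AntitoneOn (decRearr R w) (Ioi 0) := by
  intro s hs s' _ hss'
  apply csInf_le_csInf ⟨0, fun x hx => hx.1⟩
  · obtain ⟨t, ht0, htd⟩ := hlp_d_spectrum (R := R) hw (mem_Ioi.1 hs)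
    exact ⟨t, ht0, htd⟩
  · exact fun t ht => ⟨ht.1, ht.2.trans hss'⟩

/-- Key equivalence: for `t ≥ 0` and `s > 0`, `t < w*(s) ↔ s < d(t)`. -/
lemma hlp_key (hw : Measurable w) {t s : ℝ} (ht : 0 ≤ t) (hs : 0 < s) :
    t < decRearr R w s ↔ s < distribFun R w t := by
  constructor
  · intro h
    by_contra hc
    push_neg at hc
    have hbdd : BddBelow {t' : ℝ | 0 ≤ t' ∧ distribFun R w t' ≤ s} :=
      ⟨0, fun x hx => hx.1⟩
    exact absurd (csInf_le hbdd ⟨ht, hc⟩) (not_le.2 h)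
  · intro h
    -- right continuity of volume: A t = ⋃ n, A (t + 1/(n+1))
    have hUnion : {x ∈ Icc (0:ℝ) R | t < w x}
        = ⋃ n : ℕ, {x ∈ Icc (0:ℝ) R | t + 1 / (n + 1) < w x} := by
      ext x
      simp only [mem_setOf_eq, mem_iUnion]
      constructor
      · rintro ⟨hx1, hx2⟩
        obtain ⟨n, hn⟩ := exists_nat_one_div_lt (sub_pos.2 hx2)
        exact ⟨n, hx1, by push_cast; linarith⟩
      · rintro ⟨n, hx1, hx2⟩
        refine ⟨hx1, lt_trans ?_ hx2⟩
        have : (0:ℝ) < 1 / (n + 1) := by positivity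
        linarith
    have hmono : Monotone (fun n : ℕ => {x ∈ Icc (0:ℝ) R | t + 1 / (n + 1) < w x}) := by
      intro n m hnm x hx
      refine ⟨hx.1, lt_of_le_of_lt (add_le_add (le_refl t) ?_) hx.2⟩
      apply one_div_le_one_div_of_le (by positivity)
      exact_mod_cast add_le_add_left (Nat.cast_le.2 hnm) 1
    have hvol : volume {x ∈ Icc (0:ℝ) R | t < w x}
        = ⨆ n : ℕ, volume {x ∈ Icc (0:ℝ) R | t + 1 / (n + 1) < w x} := by
      rw [hUnion]
      exact hmono.measure_iUnion
    have hlt : ENNReal.ofReal s < volume {x ∈ Icc (0:ℝ) R | t < w x} :=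
      (ENNReal.ofReal_lt_iff_lt_toReal hs.le (hlp_vol_ne_top R w t)).2 h
    rw [hvol, lt_iSup_iff] at hlt
    obtain ⟨n, hn⟩ := hlt
    have hsn : s < distribFun R w (t + 1 / (n + 1)) :=
      (ENNReal.ofReal_lt_iff_lt_toReal hs.le (hlp_vol_ne_top R w _)).1 hn
    have hlb : ∀ t' ∈ {t' : ℝ | 0 ≤ t' ∧ distribFun R w t' ≤ s}, t + 1 / (n + 1) ≤ t' := by
      rintro t' ⟨_, ht'd⟩
      by_contra hc
      push_neg at hc
      exact absurd (hlp_d_anti R w hc.le) (not_le.2 (lt_of_le_of_lt ht'd hsn))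
    have hne : {t' : ℝ | 0 ≤ t' ∧ distribFun R w t' ≤ s}.Nonempty := by
      obtain ⟨t', h1, h2⟩ := hlp_d_spectrum (R := R) hw hs
      exact ⟨t', h1, h2⟩
    have : t + 1 / (n + 1) ≤ decRearr R w s := le_csInf hne hlb
    have hpos : (0:ℝ) < 1 / (n + 1) := by positivity
    linarith

/-- Superlevel sets of the decreasing rearrangement. -/
lemma hlp_superlevel (hw : Measurable w) (hR : 0 < R) {t : ℝ} (ht : 0 ≤ t) :
    {s ∈ Ioc (0:ℝ) R | t < decRearr R w s} = Ioo 0 (distribFun R w t) := by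
  ext s
  simp only [mem_setOf_eq, mem_Ioc, mem_Ioo]
  constructor
  · rintro ⟨⟨hs0, _⟩, hts⟩
    exact ⟨hs0, (hlp_key hw ht hs0).1 hts⟩
  · rintro ⟨hs0, hsd⟩
    exact ⟨⟨hs0, le_trans hsd.le (hlp_d_le_R hR t)⟩, (hlp_key hw ht hs0).2 hsd⟩

end basic

section eqm
variable {R : ℝ} {w : ℝ → ℝ}

lemma hlp_rpow_meas {c : ℝ} (hc : 0 ≤ c) (hw : Measurable w) :
    Measurable (fun x => w x ^ c) :=
  (Real.continuous_rpow_const hc).measurable.comp hw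

/-- Equimeasurability: the `c`-th power integrals of `w` on `[0,R]` and of its
decreasing rearrangement on `(0,R]` agree. -/
lemma hlp_eqm (hR : 0 < R) (hw : Measurable w) (hw0 : ∀ x, 0 ≤ w x) {c : ℝ} (hc : 0 < c) :
    ∫⁻ x in Icc (0:ℝ) R, ENNReal.ofReal (w x ^ c)
      = ∫⁻ s in Ioc (0:ℝ) R, ENNReal.ofReal (decRearr R w s ^ c) := by
  set F := decRearr R w with hF
  have hFanti : AntitoneOn F (Ioi 0) := hlp_F_anti hw
  have hFc_anti : AntitoneOn (fun s => F s ^ c) (Ioi 0) := fun a ha b hb hab =>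
    Real.rpow_le_rpow (hlp_F_nonneg R w b) (hFanti ha hb hab) hc.le
  set uc := (Ioi (0:ℝ)).indicator (fun s => F s ^ c) with huc
  have hucmeas : Measurable uc := hlp_meas_indicator hFc_anti
  have huc0 : ∀ s, 0 ≤ uc s := fun s =>
    Set.indicator_nonneg (fun a _ => Real.rpow_nonneg (hlp_F_nonneg R w a) c) s
  have step1 : ∫⁻ s in Ioc (0:ℝ) R, ENNReal.ofReal (F s ^ c)
      = ∫⁻ s in Ioc (0:ℝ) R, ENNReal.ofReal (uc s) := by
    apply setLIntegral_congr_fun measurableSet_Ioc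
    intro s hs
    dsimp only
    rw [huc, Set.indicator_of_mem (mem_Ioi.2 hs.1)]
  have lhs_eq := lintegral_eq_lintegral_meas_lt (volume.restrict (Icc (0:ℝ) R))
    (Filter.Eventually.of_forall (fun x => Real.rpow_nonneg (hw0 x) c))
    (hlp_rpow_meas hc.le hw).aemeasurable
  have rhs_eq := lintegral_eq_lintegral_meas_lt (volume.restrict (Ioc (0:ℝ) R))
    (Filter.Eventually.of_forall huc0) hucmeas.aemeasurable
  rw [lhs_eq, step1, rhs_eq]
  apply setLIntegral_congr_fun measurableSet_Ioi
  intro t ht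
  dsimp only
  have ht' : (0:ℝ) < t := ht
  set τ := t ^ c⁻¹ with hτdef
  have hτ : 0 ≤ τ := Real.rpow_nonneg ht'.le c⁻¹
  have hτc : τ ^ c = t := Real.rpow_inv_rpow ht'.le hc.ne'
  have iff1 : ∀ a : ℝ, 0 ≤ a → (t < a ^ c ↔ τ < a) := by
    intro a ha
    rw [← hτc]
    exact Real.rpow_lt_rpow_iff hτ ha hc
  have lhs_set : {x | t < w x ^ c} ∩ Icc (0:ℝ) R = {x ∈ Icc (0:ℝ) R | τ < w x} := by
    ext x
    simp only [mem_inter_iff, mem_setOf_eq]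
    rw [iff1 (w x) (hw0 x)]
    exact and_comm
  have rhs_set : {s | t < uc s} ∩ Ioc (0:ℝ) R = Ioo 0 (distribFun R w τ) := by
    rw [← hlp_superlevel hw hR hτ]
    ext s
    simp only [mem_inter_iff, mem_setOf_eq, mem_Ioc]
    constructor
    · rintro ⟨h1, h2⟩
      rw [huc, Set.indicator_of_mem (mem_Ioi.2 h2.1)] at h1
      exact ⟨h2, (iff1 (F s) (hlp_F_nonneg R w s)).1 h1⟩
    · rintro ⟨h2, h1⟩
      refine ⟨?_, h2⟩
      rw [huc, Set.indicator_of_mem (mem_Ioi.2 h2.1)]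
      exact (iff1 (F s) (hlp_F_nonneg R w s)).2 h1
  have m1 : MeasurableSet {a : ℝ | t < w a ^ c} :=
    measurableSet_lt measurable_const (hlp_rpow_meas hc.le hw)
  have m2 : MeasurableSet {a : ℝ | t < uc a} := measurableSet_lt measurable_const hucmeas
  rw [Measure.restrict_apply m1, Measure.restrict_apply m2, lhs_set, rhs_set,
    Real.volume_Ioo, sub_zero]
  exact (ENNReal.ofReal_toReal (hlp_vol_ne_top R w τ)).symm

end eqm
section hardy

lemma hlp_le_one_add_rpow {x r : ℝ} (hx : 0 ≤ x) (hr : 1 ≤ r) : x ≤ 1 + x ^ r := by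
  rcases le_or_gt x 1 with h | h
  · have : 0 ≤ x ^ r := Real.rpow_nonneg hx r
    linarith
  · have h2 : x ^ (1:ℝ) ≤ x ^ r := Real.rpow_le_rpow_of_exponent_le h.le hr
    rw [Real.rpow_one] at h2
    linarith

lemma hlp_hardy {R r : ℝ} (hR : 0 < R) (hr : 1 ≤ r) {u v : ℝ → ℝ}
    (hu : Measurable u) (hv : Measurable v)
    (hu0 : ∀ s, 0 ≤ u s) (hv0 : ∀ s, 0 ≤ v s)
    (hua : AntitoneOn u (Ioi 0))
    (hur : IntegrableOn (fun s => u s ^ r) (Ioc (0:ℝ) R))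
    (hvr : IntegrableOn (fun s => v s ^ r) (Ioc (0:ℝ) R))
    (hwv : IntegrableOn (fun s => u s ^ (r - 1) * v s) (Ioc (0:ℝ) R))
    (hcomp : ∀ a ∈ Icc (0:ℝ) R, ∫ s in Ioc (0:ℝ) a, u s ≤ ∫ s in Ioc (0:ℝ) a, v s) :
    ∫ s in Ioc (0:ℝ) R, u s ^ r ≤ ∫ s in Ioc (0:ℝ) R, v s ^ r := by
  have hvolIoc : volume (Ioc (0:ℝ) R) < ∞ := measure_Ioc_lt_top
  have hconst : IntegrableOn (fun _ : ℝ => (1:ℝ)) (Ioc (0:ℝ) R) :=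
    integrableOn_const hvolIoc.ne
  have hui : IntegrableOn u (Ioc (0:ℝ) R) := by
    refine Integrable.mono' (hconst.add hur)
      hu.aestronglyMeasurable (Filter.Eventually.of_forall fun s => ?_)
    rw [Real.norm_of_nonneg (hu0 s)]
    exact hlp_le_one_add_rpow (hu0 s) hr
  have hvi : IntegrableOn v (Ioc (0:ℝ) R) := by
    refine Integrable.mono' (hconst.add hvr)
      hv.aestronglyMeasurable (Filter.Eventually.of_forall fun s => ?_)
    rw [Real.norm_of_nonneg (hv0 s)]
    exact hlp_le_one_add_rpow (hv0 s) hr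
  set w : ℝ → ℝ := fun s => u s ^ (r - 1) with hwdef
  set h : ℝ → ℝ := fun s => u s - v s with hhdef
  have hw_meas : Measurable w := hlp_rpow_meas (by linarith) hu
  have hw0 : ∀ s, 0 ≤ w s := fun s => Real.rpow_nonneg (hu0 s) _
  have hwanti : AntitoneOn w (Ioi 0) := fun a ha b hb hab =>
    Real.rpow_le_rpow (hu0 b) (hua ha hb hab) (by linarith)
  have h_meas : Measurable h := hu.sub hv
  have hhi : IntegrableOn h (Ioc (0:ℝ) R) := hui.sub hvi
  have keywu : ∀ s, w s * u s = u s ^ r := by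
    intro s
    show u s ^ (r - 1) * u s = u s ^ r
    rw [show r = (r - 1) + 1 by ring,
      Real.rpow_add' (hu0 s) (ne_of_gt (by linarith : (0:ℝ) < (r - 1) + 1)),
      Real.rpow_one]
    ring_nf
  have hwh_eq : ∀ s, w s * h s = u s ^ r - u s ^ (r - 1) * v s := by
    intro s
    show w s * (u s - v s) = u s ^ r - u s ^ (r - 1) * v s
    rw [mul_sub, keywu s]
  have hwhi : IntegrableOn (fun s => w s * h s) (Ioc (0:ℝ) R) :=
    (hur.sub hwv).congr (Filter.Eventually.of_forall fun s => (hwh_eq s).symm)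
  have claim : ∫ s in Ioc (0:ℝ) R, w s * h s ≤ 0 := by
    set μ := volume.restrict (Ioc (0:ℝ) R) with hμ
    set ν := volume.restrict (Ioi (0:ℝ)) with hν
    set Φ : ℝ → ℝ → ℝ := fun s τ => if τ < w s then h s else 0 with hΦ
    have hEmeas : MeasurableSet {p : ℝ × ℝ | p.2 < w p.1} :=
      measurableSet_lt measurable_snd (hw_meas.comp measurable_fst)
    have huncurry : Function.uncurry Φ =
        ({p : ℝ × ℝ | p.2 < w p.1}).indicator (fun p => h p.1) := by
      ext ⟨s, τ⟩
      simp only [Function.uncurry, Set.indicator_apply, mem_setOf_eq, hΦ]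
    have hΦsm : AEStronglyMeasurable (Function.uncurry Φ) (μ.prod ν) := by
      rw [huncurry]
      exact ((h_meas.comp measurable_fst).indicator hEmeas).aestronglyMeasurable
    have hΦind : ∀ s, (fun τ => Φ s τ) = (Iio (w s)).indicator (fun _ => h s) := by
      intro s
      funext τ
      simp only [Set.indicator_apply, mem_Iio, hΦ]
    have hΦnormind : ∀ s, (fun τ => ‖Φ s τ‖) = (Iio (w s)).indicator (fun _ => |h s|) := by
      intro s
      funext τ
      simp only [hΦ, Set.indicator_apply, mem_Iio]
      split_ifs <;> simp [Real.norm_eq_abs]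
    have compute : ∀ c : ℝ, ∀ b : ℝ, 0 ≤ b →
        ∫ τ, (Iio b).indicator (fun _ => c) τ ∂ν = b * c := by
      intro c b hb
      rw [integral_indicator measurableSet_Iio, hν,
        Measure.restrict_restrict measurableSet_Iio, Iio_inter_Ioi,
        setIntegral_const, Real.volume_real_Ioo_of_le hb, sub_zero, smul_eq_mul]
    have hintτ : ∀ s, Integrable (fun τ => Φ s τ) ν := by
      intro s
      rw [hΦind s, integrable_indicator_iff measurableSet_Iio]
      refine integrableOn_const ?_
      rw [hν, Measure.restrict_apply measurableSet_Iio, Iio_inter_Ioi]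
      exact measure_Ioo_lt_top.ne
    have hnorm_int : Integrable (fun s => ∫ τ, ‖Φ s τ‖ ∂ν) μ := by
      have heq : (fun s => ∫ τ, ‖Φ s τ‖ ∂ν) = fun s => w s * |h s| := by
        funext s
        rw [hΦnormind s, compute (|h s|) (w s) (hw0 s)]
      rw [heq]
      refine (hwhi.abs).congr (Filter.Eventually.of_forall fun s => ?_)
      show |w s * h s| = w s * |h s|
      rw [abs_mul, abs_of_nonneg (hw0 s)]
    have hintprod : Integrable (Function.uncurry Φ) (μ.prod ν) :=
      (integrable_prod_iff hΦsm).2 ⟨Filter.Eventually.of_forall hintτ, hnorm_int⟩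
    have swap := integral_integral_swap hintprod
    have lhs_eq : ∫ s, (∫ τ, Φ s τ ∂ν) ∂μ = ∫ s, w s * h s ∂μ := by
      apply integral_congr_ae
      apply Filter.Eventually.of_forall
      intro s
      show (∫ τ, Φ s τ ∂ν) = w s * h s
      rw [hΦind s, compute (h s) (w s) (hw0 s)]
    have rhs_le : ∫ τ, (∫ s, Φ s τ ∂μ) ∂ν ≤ 0 := by
      apply integral_nonpos_of_ae
      rw [hν]
      refine (ae_restrict_iff' measurableSet_Ioi).2
        (Filter.Eventually.of_forall fun τ hτ => ?_)
      have hτ0 : (0:ℝ) < τ := hτ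
      have hBmeas : MeasurableSet {s : ℝ | τ < w s} :=
        measurableSet_lt measurable_const hw_meas
      have heq : (fun s => Φ s τ) = ({s : ℝ | τ < w s}).indicator h := by
        funext s
        simp only [hΦ, Set.indicator_apply, mem_setOf_eq]
      show (∫ s, Φ s τ ∂μ) ≤ 0
      rw [heq, integral_indicator hBmeas, hμ, Measure.restrict_restrict hBmeas]
      set A := {s : ℝ | τ < w s} ∩ Ioc (0:ℝ) R with hA
      rcases A.eq_empty_or_nonempty with hAe | hAne
      · rw [hAe]
        simp
      · have hAsub : A ⊆ Ioc (0:ℝ) R := inter_subset_right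
        have hAdc : ∀ x ∈ A, ∀ y, 0 < y → y ≤ x → y ∈ A := by
          rintro x ⟨hx1, hx2⟩ y hy hyx
          refine ⟨lt_of_lt_of_le hx1 (hwanti (mem_Ioi.2 hy) (mem_Ioi.2 hx2.1) hyx),
            hy, hyx.trans hx2.2⟩
        set a := sSup A with ha
        have hbdd : BddAbove A := ⟨R, fun x hx => (hAsub hx).2⟩
        have ha_pos : 0 < a := by
          obtain ⟨x, hx⟩ := hAne
          exact lt_of_lt_of_le (hAsub hx).1 (le_csSup hbdd hx)
        have haR : a ≤ R := csSup_le hAne (fun x hx => (hAsub hx).2)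
        have hsub1 : A ⊆ Ioc 0 a := fun x hx => ⟨(hAsub hx).1, le_csSup hbdd hx⟩
        have hsub2 : Ioo 0 a ⊆ A := by
          intro x hx
          obtain ⟨y, hy, hxy⟩ := exists_lt_of_lt_csSup hAne hx.2
          exact hAdc y hy x hx.1 hxy.le
        have haeeq : A =ᵐ[volume] Ioc 0 a := by
          rw [MeasureTheory.ae_eq_set]
          constructor
          · rw [diff_eq_empty.2 hsub1]
            exact measure_empty
          · refine measure_mono_null (t := {a}) (fun x hx => ?_) Real.volume_singleton
            rcases lt_or_eq_of_le hx.1.2 with hlt | heq'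
            · exact absurd (hsub2 ⟨hx.1.1, hlt⟩) hx.2
            · exact mem_singleton_iff.2 heq'
        rw [setIntegral_congr_set haeeq]
        have hIoc : Ioc (0:ℝ) a ⊆ Ioc (0:ℝ) R := Ioc_subset_Ioc_right haR
        have : ∫ s in Ioc (0:ℝ) a, h s = (∫ s in Ioc (0:ℝ) a, u s) - ∫ s in Ioc (0:ℝ) a, v s := by
          simp only [hhdef]
          exact integral_sub (hui.mono_set hIoc) (hvi.mono_set hIoc)
        rw [this]
        have := hcomp a ⟨ha_pos.le, haR⟩
        linarith
    calc ∫ s in Ioc (0:ℝ) R, w s * h s = ∫ s, (∫ τ, Φ s τ ∂ν) ∂μ := lhs_eq.symm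
      _ = ∫ τ, (∫ s, Φ s τ ∂μ) ∂ν := swap
      _ ≤ 0 := rhs_le
  have step1 : ∫ s in Ioc (0:ℝ) R, (u s ^ r - v s ^ r)
      ≤ ∫ s in Ioc (0:ℝ) R, r * (w s * h s) := by
    refine integral_mono (hur.sub hvr) (hwhi.const_mul r) (fun s => ?_)
    calc u s ^ r - v s ^ r ≤ r * u s ^ (r - 1) * (u s - v s) :=
          hlp_rpow_tangent (hu0 s) (hv0 s) hr
      _ = r * (w s * h s) := by
          show _ = r * (u s ^ (r - 1) * (u s - v s))
          ring
  rw [integral_sub hur hvr, integral_const_mul] at step1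
  have hr0 : (0:ℝ) ≤ r := by linarith
  have hmul : r * ∫ s in Ioc (0:ℝ) R, w s * h s ≤ 0 := by
    have := mul_le_mul_of_nonneg_left claim hr0
    simpa using this
  linarith

end hardy
section core

lemma hlp_young {x y r : ℝ} (hx : 0 ≤ x) (hy : 0 ≤ y) (hr : 1 ≤ r) :
    x ^ (r - 1) * y ≤ 1 + (x ^ r + y ^ r) := by
  set m := max x y with hm
  have hm0 : 0 ≤ m := le_trans hx (le_max_left x y)
  have h1 : x ^ (r - 1) ≤ m ^ (r - 1) :=
    Real.rpow_le_rpow hx (le_max_left x y) (by linarith)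
  have h2 : y ≤ m := le_max_right x y
  have h3 : x ^ (r - 1) * y ≤ m ^ (r - 1) * m :=
    mul_le_mul h1 h2 hy (Real.rpow_nonneg hm0 _)
  have h4 : m ^ (r - 1) * m = m ^ r := by
    rw [show r = (r - 1) + 1 by ring,
      Real.rpow_add' hm0 (ne_of_gt (by linarith : (0:ℝ) < (r - 1) + 1)), Real.rpow_one]
    ring_nf
  have h5 : m ^ r ≤ x ^ r + y ^ r := by
    rcases max_cases x y with ⟨hmx, _⟩ | ⟨hmy, _⟩
    · rw [hm, hmx]
      have : 0 ≤ y ^ r := Real.rpow_nonneg hy r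
      linarith
    · rw [hm, hmy]
      have : 0 ≤ x ^ r := Real.rpow_nonneg hx r
      linarith
  linarith

theorem hlp_core (R p q : ℝ) (hR : 0 < R) (hp : 0 < p) (hpq : p ≤ q)
    (f g : ℝ → ℝ) (hfm : Measurable f) (hgm : Measurable g)
    (hf0 : ∀ x, 0 ≤ f x) (hg0 : ∀ x, 0 ≤ g x)
    (hf : MemLp f (ENNReal.ofReal q) (volume.restrict (Icc (0:ℝ) R)))
    (hg : MemLp g (ENNReal.ofReal q) (volume.restrict (Icc (0:ℝ) R)))
    (hcomp : ∀ s ∈ Icc (0:ℝ) R,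
      ∫ t in (0:ℝ)..s, (decRearr R f t) ^ p ≤ ∫ t in (0:ℝ)..s, (decRearr R g t) ^ p) :
    ∫ t in (0:ℝ)..R, (f t) ^ q ≤ ∫ t in (0:ℝ)..R, (g t) ^ q := by
  have hq : 0 < q := lt_of_lt_of_le hp hpq
  set r := q / p with hrdef
  have hr : 1 ≤ r := (one_le_div hp).2 hpq
  have hpr : p * r = q := by rw [hrdef, ← mul_div_assoc, mul_div_cancel_left₀ q hp.ne']
  set F := decRearr R f with hF
  set G := decRearr R g with hG
  have hFanti : AntitoneOn F (Ioi 0) := hlp_F_anti hfm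
  have hGanti : AntitoneOn G (Ioi 0) := hlp_F_anti hgm
  have hFp_anti : AntitoneOn (fun s => F s ^ p) (Ioi 0) := fun a ha b hb hab =>
    Real.rpow_le_rpow (hlp_F_nonneg R f b) (hFanti ha hb hab) hp.le
  have hGp_anti : AntitoneOn (fun s => G s ^ p) (Ioi 0) := fun a ha b hb hab =>
    Real.rpow_le_rpow (hlp_F_nonneg R g b) (hGanti ha hb hab) hp.le
  set u := (Ioi (0:ℝ)).indicator (fun s => F s ^ p) with hu
  set v := (Ioi (0:ℝ)).indicator (fun s => G s ^ p) with hv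
  have humeas : Measurable u := hlp_meas_indicator hFp_anti
  have hvmeas : Measurable v := hlp_meas_indicator hGp_anti
  have hu0 : ∀ s, 0 ≤ u s := fun s =>
    Set.indicator_nonneg (fun a _ => Real.rpow_nonneg (hlp_F_nonneg R f a) p) s
  have hv0 : ∀ s, 0 ≤ v s := fun s =>
    Set.indicator_nonneg (fun a _ => Real.rpow_nonneg (hlp_F_nonneg R g a) p) s
  have huanti : AntitoneOn u (Ioi 0) := by
    intro a ha b hb hab
    rw [hu, Set.indicator_of_mem ha, Set.indicator_of_mem hb]
    exact hFp_anti ha hb hab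
  -- identification of u^r with F^q on Ioi 0
  have huF : ∀ s ∈ Ioi (0:ℝ), u s ^ r = F s ^ q := by
    intro s hs
    rw [hu, Set.indicator_of_mem hs, ← Real.rpow_mul (hlp_F_nonneg R f s) p r, hpr]
  have hvG : ∀ s ∈ Ioi (0:ℝ), v s ^ r = G s ^ q := by
    intro s hs
    rw [hv, Set.indicator_of_mem hs, ← Real.rpow_mul (hlp_F_nonneg R g s) p r, hpr]
  -- integrability of f^q and lintegral identities
  have hfq_int : Integrable (fun x => f x ^ q) (volume.restrict (Icc (0:ℝ) R)) := by
    have h1 := hf.integrable_norm_rpow (by rw [Ne, ENNReal.ofReal_eq_zero]; exact not_le.2 hq) ENNReal.ofReal_ne_top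
    rw [ENNReal.toReal_ofReal hq.le] at h1
    refine h1.congr (Filter.Eventually.of_forall fun x => ?_)
    show ‖f x‖ ^ q = f x ^ q
    rw [Real.norm_of_nonneg (hf0 x)]
  have hgq_int : Integrable (fun x => g x ^ q) (volume.restrict (Icc (0:ℝ) R)) := by
    have h1 := hg.integrable_norm_rpow (by rw [Ne, ENNReal.ofReal_eq_zero]; exact not_le.2 hq) ENNReal.ofReal_ne_top
    rw [ENNReal.toReal_ofReal hq.le] at h1
    refine h1.congr (Filter.Eventually.of_forall fun x => ?_)
    show ‖g x‖ ^ q = g x ^ q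
    rw [Real.norm_of_nonneg (hg0 x)]
  have hfq_lt : ∫⁻ x in Icc (0:ℝ) R, ENNReal.ofReal (f x ^ q) < ∞ :=
    hfq_int.lintegral_lt_top
  have hgq_lt : ∫⁻ x in Icc (0:ℝ) R, ENNReal.ofReal (g x ^ q) < ∞ :=
    hgq_int.lintegral_lt_top
  have heqmf : ∫⁻ x in Icc (0:ℝ) R, ENNReal.ofReal (f x ^ q)
      = ∫⁻ s in Ioc (0:ℝ) R, ENNReal.ofReal (u s ^ r) := by
    rw [hlp_eqm hR hfm hf0 hq]
    refine setLIntegral_congr_fun measurableSet_Ioc ?_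
    intro s hs
    dsimp only
    rw [huF s (mem_Ioi.2 hs.1)]
  have heqmg : ∫⁻ x in Icc (0:ℝ) R, ENNReal.ofReal (g x ^ q)
      = ∫⁻ s in Ioc (0:ℝ) R, ENNReal.ofReal (v s ^ r) := by
    rw [hlp_eqm hR hgm hg0 hq]
    refine setLIntegral_congr_fun measurableSet_Ioc ?_
    intro s hs
    dsimp only
    rw [hvG s (mem_Ioi.2 hs.1)]
  have hr0 : (0:ℝ) ≤ r := by linarith
  have hurmeas : Measurable (fun s => u s ^ r) := hlp_rpow_meas hr0 humeas
  have hvrmeas : Measurable (fun s => v s ^ r) := hlp_rpow_meas hr0 hvmeas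
  have hur : IntegrableOn (fun s => u s ^ r) (Ioc (0:ℝ) R) :=
    ⟨hurmeas.aestronglyMeasurable,
      (hasFiniteIntegral_iff_ofReal (Filter.Eventually.of_forall fun s =>
        Real.rpow_nonneg (hu0 s) r)).2 (heqmf ▸ hfq_lt)⟩
  have hvr : IntegrableOn (fun s => v s ^ r) (Ioc (0:ℝ) R) :=
    ⟨hvrmeas.aestronglyMeasurable,
      (hasFiniteIntegral_iff_ofReal (Filter.Eventually.of_forall fun s =>
        Real.rpow_nonneg (hv0 s) r)).2 (heqmg ▸ hgq_lt)⟩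
  have hwv : IntegrableOn (fun s => u s ^ (r - 1) * v s) (Ioc (0:ℝ) R) := by
    have hconst : IntegrableOn (fun _ : ℝ => (1:ℝ)) (Ioc (0:ℝ) R) :=
      integrableOn_const measure_Ioc_lt_top.ne
    refine Integrable.mono' (hconst.add (hur.add hvr))
      ((hlp_rpow_meas (by linarith) humeas).mul hvmeas).aestronglyMeasurable
      (Filter.Eventually.of_forall fun s => ?_)
    rw [Real.norm_of_nonneg (mul_nonneg (Real.rpow_nonneg (hu0 s) _) (hv0 s))]
    exact hlp_young (hu0 s) (hv0 s) hr
  -- comparison hypothesis in set-integral form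
  have hcomp' : ∀ a ∈ Icc (0:ℝ) R, ∫ s in Ioc (0:ℝ) a, u s ≤ ∫ s in Ioc (0:ℝ) a, v s := by
    intro a ha
    have h1 := hcomp a ha
    rw [intervalIntegral.integral_of_le ha.1, intervalIntegral.integral_of_le ha.1] at h1
    have e1 : ∫ s in Ioc (0:ℝ) a, u s = ∫ s in Ioc (0:ℝ) a, F s ^ p :=
      setIntegral_congr_fun measurableSet_Ioc
        (fun s hs => by rw [hu, Set.indicator_of_mem (mem_Ioi.2 hs.1)])
    have e2 : ∫ s in Ioc (0:ℝ) a, v s = ∫ s in Ioc (0:ℝ) a, G s ^ p :=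
      setIntegral_congr_fun measurableSet_Ioc
        (fun s hs => by rw [hv, Set.indicator_of_mem (mem_Ioi.2 hs.1)])
    rw [e1, e2]
    exact h1
  have hardy := hlp_hardy hR hr humeas hvmeas hu0 hv0 huanti hur hvr hwv hcomp'
  -- convert the goal
  have convf : ∫ t in (0:ℝ)..R, f t ^ q = ∫ s in Ioc (0:ℝ) R, u s ^ r := by
    rw [intervalIntegral.integral_of_le hR.le, ← integral_Icc_eq_integral_Ioc,
      integral_eq_lintegral_of_nonneg_ae
        (Filter.Eventually.of_forall fun x => Real.rpow_nonneg (hf0 x) q)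
        (hlp_rpow_meas hq.le hfm).aestronglyMeasurable,
      heqmf,
      integral_eq_lintegral_of_nonneg_ae
        (Filter.Eventually.of_forall fun s => Real.rpow_nonneg (hu0 s) r)
        hurmeas.aestronglyMeasurable]
  have convg : ∫ t in (0:ℝ)..R, g t ^ q = ∫ s in Ioc (0:ℝ) R, v s ^ r := by
    rw [intervalIntegral.integral_of_le hR.le, ← integral_Icc_eq_integral_Ioc,
      integral_eq_lintegral_of_nonneg_ae
        (Filter.Eventually.of_forall fun x => Real.rpow_nonneg (hg0 x) q)
        (hlp_rpow_meas hq.le hgm).aestronglyMeasurable,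
      heqmg,
      integral_eq_lintegral_of_nonneg_ae
        (Filter.Eventually.of_forall fun s => Real.rpow_nonneg (hv0 s) r)
        hvrmeas.aestronglyMeasurable]
  rw [convf, convg]
  exact hardy

end core
section wrapper

lemma hlp_distrib_congr {R : ℝ} (hR : 0 < R) {f f₁ : ℝ → ℝ}
    (hae : f =ᵐ[volume.restrict (Icc (0:ℝ) R)] f₁) :
    distribFun R f = distribFun R f₁ := by
  funext t
  have hDnull : volume ({x | f x ≠ f₁ x} ∩ Icc (0:ℝ) R) = 0 := by
    have h0 : (volume.restrict (Icc (0:ℝ) R)) {x | f x ≠ f₁ x} = 0 := hae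
    rwa [Measure.restrict_apply' measurableSet_Icc] at h0
  have key : volume {x ∈ Icc (0:ℝ) R | t < f x} = volume {x ∈ Icc (0:ℝ) R | t < f₁ x} := by
    have hsub : ∀ (a b : ℝ → ℝ), {x ∈ Icc (0:ℝ) R | t < a x}
        ⊆ {x ∈ Icc (0:ℝ) R | t < b x} ∪ ({x | a x ≠ b x} ∩ Icc (0:ℝ) R) := by
      intro a b x hx
      by_cases hab : a x = b x
      · exact Or.inl ⟨hx.1, hab ▸ hx.2⟩
      · exact Or.inr ⟨hab, hx.1⟩
    have hDnull' : volume ({x | f₁ x ≠ f x} ∩ Icc (0:ℝ) R) = 0 := by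
      refine measure_mono_null (fun x hx => ?_) hDnull
      exact ⟨fun h => hx.1 h.symm, hx.2⟩
    apply le_antisymm
    · calc volume {x ∈ Icc (0:ℝ) R | t < f x}
          ≤ volume ({x ∈ Icc (0:ℝ) R | t < f₁ x} ∪ ({x | f x ≠ f₁ x} ∩ Icc (0:ℝ) R)) :=
            measure_mono (hsub f f₁)
        _ ≤ volume {x ∈ Icc (0:ℝ) R | t < f₁ x} + volume ({x | f x ≠ f₁ x} ∩ Icc (0:ℝ) R) :=
            measure_union_le _ _
        _ = volume {x ∈ Icc (0:ℝ) R | t < f₁ x} := by rw [hDnull, add_zero]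
    · calc volume {x ∈ Icc (0:ℝ) R | t < f₁ x}
          ≤ volume ({x ∈ Icc (0:ℝ) R | t < f x} ∪ ({x | f₁ x ≠ f x} ∩ Icc (0:ℝ) R)) :=
            measure_mono (hsub f₁ f)
        _ ≤ volume {x ∈ Icc (0:ℝ) R | t < f x} + volume ({x | f₁ x ≠ f x} ∩ Icc (0:ℝ) R) :=
            measure_union_le _ _
        _ = volume {x ∈ Icc (0:ℝ) R | t < f x} := by rw [hDnull', add_zero]
  unfold distribFun
  rw [key]

end wrapper


/-- Hardy–Littlewood–Pólya comparison lemma: if the `p`-th power integrals of the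
decreasing rearrangements are comparable on every initial segment of `[0,R]`,
then the `L^q` norms are comparable for every `q ≥ p`. -/
theorem stmt0 (R p q : ℝ) (hR : 0 < R) (hp : 0 < p) (hpq : p ≤ q)
    (f g : ℝ → ℝ) (hf0 : ∀ x, 0 ≤ f x) (hg0 : ∀ x, 0 ≤ g x)
    (hf : MemLp f (ENNReal.ofReal q) (volume.restrict (Icc (0:ℝ) R)))
    (hg : MemLp g (ENNReal.ofReal q) (volume.restrict (Icc (0:ℝ) R)))
    (hcomp : ∀ s ∈ Icc (0:ℝ) R,
      ∫ t in (0:ℝ)..s, (decRearr R f t) ^ p ≤ ∫ t in (0:ℝ)..s, (decRearr R g t) ^ p) :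
    ∫ t in (0:ℝ)..R, (f t) ^ q ≤ ∫ t in (0:ℝ)..R, (g t) ^ q := by
  have hq : 0 < q := lt_of_lt_of_le hp hpq
  -- measurable nonnegative representatives
  set f₁ : ℝ → ℝ := fun x => max (hf.1.mk f x) 0 with hf₁def
  set g₁ : ℝ → ℝ := fun x => max (hg.1.mk g x) 0 with hg₁def
  have hf₁m : Measurable f₁ := (hf.1.stronglyMeasurable_mk.measurable).max measurable_const
  have hg₁m : Measurable g₁ := (hg.1.stronglyMeasurable_mk.measurable).max measurable_const
  have hf₁0 : ∀ x, 0 ≤ f₁ x := fun x => le_max_right _ _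
  have hg₁0 : ∀ x, 0 ≤ g₁ x := fun x => le_max_right _ _
  have haef : f =ᵐ[volume.restrict (Icc (0:ℝ) R)] f₁ := by
    filter_upwards [hf.1.ae_eq_mk] with x hx
    rw [hf₁def]
    simp only
    rw [← hx, max_eq_left (hf0 x)]
  have haeg : g =ᵐ[volume.restrict (Icc (0:ℝ) R)] g₁ := by
    filter_upwards [hg.1.ae_eq_mk] with x hx
    rw [hg₁def]
    simp only
    rw [← hx, max_eq_left (hg0 x)]
  have hdf : distribFun R f = distribFun R f₁ := hlp_distrib_congr hR haef
  have hdg : distribFun R g = distribFun R g₁ := hlp_distrib_congr hR haeg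
  have hdecf : decRearr R f = decRearr R f₁ := by
    funext s
    unfold decRearr
    rw [hdf]
  have hdecg : decRearr R g = decRearr R g₁ := by
    funext s
    unfold decRearr
    rw [hdg]
  have hf₁ : MemLp f₁ (ENNReal.ofReal q) (volume.restrict (Icc (0:ℝ) R)) := hf.ae_eq haef
  have hg₁ : MemLp g₁ (ENNReal.ofReal q) (volume.restrict (Icc (0:ℝ) R)) := hg.ae_eq haeg
  have hcomp₁ : ∀ s ∈ Icc (0:ℝ) R,
      ∫ t in (0:ℝ)..s, (decRearr R f₁ t) ^ p ≤ ∫ t in (0:ℝ)..s, (decRearr R g₁ t) ^ p := by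
    intro s hs
    rw [← hdecf, ← hdecg]
    exact hcomp s hs
  have hmain := hlp_core R p q hR hp hpq f₁ g₁ hf₁m hg₁m hf₁0 hg₁0 hf₁ hg₁ hcomp₁
  have haef' : f =ᵐ[volume.restrict (Ioc (0:ℝ) R)] f₁ :=
    ae_restrict_of_ae_restrict_of_subset Ioc_subset_Icc_self haef
  have haeg' : g =ᵐ[volume.restrict (Ioc (0:ℝ) R)] g₁ :=
    ae_restrict_of_ae_restrict_of_subset Ioc_subset_Icc_self haeg
  have ef : ∫ t in (0:ℝ)..R, f t ^ q = ∫ t in (0:ℝ)..R, f₁ t ^ q := by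
    rw [intervalIntegral.integral_of_le hR.le, intervalIntegral.integral_of_le hR.le]
    exact integral_congr_ae (haef'.mono fun x hx => by show f x ^ q = f₁ x ^ q; rw [hx])
  have eg : ∫ t in (0:ℝ)..R, g t ^ q = ∫ t in (0:ℝ)..R, g₁ t ^ q := by
    rw [intervalIntegral.integral_of_le hR.le, intervalIntegral.integral_of_le hR.le]
    exact integral_congr_ae (haeg'.mono fun x hx => by show g x ^ q = g₁ x ^ q; rw [hx])
  rw [ef, eg]
  exact hmain
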